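/- (Reciprocal velocity.) Let E be a real inner product space, M = ℝ × E with Minkowski form B and chronor T = (1,0). Let v ∈ E with ‖v‖ < 1, δ = √(1 − ‖v‖²), and T₂ = δ⁻¹ • (1, v). Then the velocity of observer T as measured by observer T₂ is π_{T₂}(T) = δ⁻¹ • ( −‖v‖² , −v ), and its Minkowski square-norm is B(π_{T₂}(T), π_{T₂}(T)) = −‖v‖²; in particular the reciprocal speeds are equal. -/

import Mathlib

open RealInnerProductSpace

variable {E : Type*} [NormedAddCommGroup E] [InnerProductSpace ℝ E]

/-- The Minkowski bilinear form on `ℝ × E`. -/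
noncomputable def minkB (A C : ℝ × E) : ℝ := A.1 * C.1 - ⟪A.2, C.2⟫

/-- The chronor `T = (1, 0)`. -/
noncomputable def chronor : ℝ × E := (1, 0)

/-- Pseudo-projection along an arbitrary chronor `T'`. -/
noncomputable def pseudoProjAlong (T' A : ℝ × E) : ℝ × E :=
  (minkB A T')⁻¹ • A - T'

/-- Reciprocal velocity: the velocity of the observer `T` as measured by the
moving observer `T₂ = δ⁻¹ • (1, v)`, and equality of reciprocal speeds. -/
theorem reciprocal_velocity (v : E) (hv : ‖v‖ < 1) :
    pseudoProjAlong ((Real.sqrt (1 - ‖v‖ ^ 2))⁻¹ • (((1 : ℝ), v) : ℝ × E))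
        (chronor : ℝ × E) =
      (Real.sqrt (1 - ‖v‖ ^ 2))⁻¹ • ((-‖v‖ ^ 2, -v) : ℝ × E) ∧
    minkB
        (pseudoProjAlong ((Real.sqrt (1 - ‖v‖ ^ 2))⁻¹ • (((1 : ℝ), v) : ℝ × E))
          (chronor : ℝ × E))
        (pseudoProjAlong ((Real.sqrt (1 - ‖v‖ ^ 2))⁻¹ • (((1 : ℝ), v) : ℝ × E))
          (chronor : ℝ × E)) = -‖v‖ ^ 2 := by
  set δ := Real.sqrt (1 - ‖v‖ ^ 2) with hδdef
  have h1 : (0:ℝ) < 1 - ‖v‖ ^ 2 := by nlinarith [norm_nonneg v]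
  have hδ : 0 < δ := Real.sqrt_pos.mpr h1
  have hδ2 : δ ^ 2 = 1 - ‖v‖ ^ 2 := Real.sq_sqrt h1.le
  have hδne : δ ≠ 0 := ne_of_gt hδ
  have hB : minkB (chronor : ℝ × E) (δ⁻¹ • (((1 : ℝ), v) : ℝ × E)) = δ⁻¹ := by
    simp [minkB, chronor, Prod.smul_def]
  have hmain : pseudoProjAlong (δ⁻¹ • (((1 : ℝ), v) : ℝ × E)) (chronor : ℝ × E)
      = δ⁻¹ • ((-‖v‖ ^ 2, -v) : ℝ × E) := by
    rw [pseudoProjAlong, hB, inv_inv]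
    ext
    · simp only [Prod.smul_def, Prod.fst_sub, smul_eq_mul, chronor]
      field_simp
      nlinarith
    · simp [Prod.smul_def, chronor]
  refine ⟨hmain, ?_⟩
  rw [hmain]
  simp only [minkB, Prod.smul_def, smul_eq_mul, real_inner_smul_left, real_inner_smul_right,
    inner_neg_neg, real_inner_self_eq_norm_sq, norm_smul, norm_neg, Real.norm_eq_abs,
    abs_of_pos (inv_pos.mpr hδ), mul_pow]
  field_simp
  linear_combination (‖v‖ ^ 2) * hδ2
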